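/- arXiv:2310.08289 — 4 statements merged into one kernel-verified Lean document; each statement's English description precedes it below -/
import Mathlib

section
/- Let A be an n×n positive definite Hermitian complex matrix, and for j = 1,…,J let B_j and B_j' be n_j×n_j positive semidefinite Hermitian complex matrices and C_j be n×n_j complex matrices. Then ln det(A + Σ_{j=1}^J C_j B_j C_j^H) ≤ ln det(A + Σ_{j=1}^J C_j B_j' C_j^H) + Σ_{j=1}^J Re Tr( C_j^H (A + Σ_{l=1}^J C_l B_l' C_l^H)^{-1} C_j (B_j − B_j') ). -/
open Matrix
open scoped ComplexOrder
open scoped MatrixOrder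

private lemma posDef_mul_mul_conjTranspose {m : ℕ} {X : Matrix (Fin m) (Fin m) ℂ}
    (hX : X.PosDef) {E : Matrix (Fin m) (Fin m) ℂ} (hE : IsUnit E) :
    (Eᴴ * X * E).PosDef := by
  have hinj : Function.Injective E.mulVec := Matrix.mulVec_injective_iff_isUnit.mpr hE
  exact hX.conjTranspose_mul_mul_same hinj

private lemma trace_eq_sum_eigenvalues {m : ℕ} {Z : Matrix (Fin m) (Fin m) ℂ}
    (hZ : Z.IsHermitian) : Z.trace = ∑ i, (hZ.eigenvalues i : ℂ) := by
  exact hZ.trace_eq_sum_eigenvalues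

private lemma posDef_det_re {m : ℕ} {M : Matrix (Fin m) (Fin m) ℂ} (hM : M.PosDef) :
    0 < M.det.re ∧ M.det = (M.det.re : ℂ) := by
  have h := hM.det_pos
  rw [Complex.lt_def] at h
  refine ⟨by simpa using h.1, ?_⟩
  exact (Complex.ext (by simp) (by simpa using h.2)).symm

/-- Key inequality: for positive definite `X, Y`,
`log (det X).re ≤ log (det Y).re + Re Tr(Y⁻¹ (X - Y))`. -/
private lemma logdet_key {m : ℕ} {X Y : Matrix (Fin m) (Fin m) ℂ}
    (hX : X.PosDef) (hY : Y.PosDef) :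
    Real.log X.det.re ≤ Real.log Y.det.re + (Matrix.trace (Y⁻¹ * (X - Y))).re := by
  classical
  set R := CFC.sqrt Y with hRdef
  have hRsemi : R.PosSemidef := (CFC.sqrt_nonneg Y).posSemidef
  have hRR : R * R = Y := CFC.sqrt_mul_sqrt_self Y hY.posSemidef.nonneg
  have hYdet : IsUnit Y.det := hY.det_pos.ne'.isUnit
  have hRdet : IsUnit R.det := by
    have : R.det * R.det = Y.det := by rw [← det_mul, hRR]
    exact isUnit_of_mul_isUnit_left (this ▸ hYdet)
  have hRunit : IsUnit R := (Matrix.isUnit_iff_isUnit_det R).mpr hRdet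
  have hRinv_herm : (R⁻¹).IsHermitian := hRsemi.isHermitian.inv
  -- Z = R⁻¹ X R⁻¹ is PosDef
  have hZ : (R⁻¹ * X * R⁻¹).PosDef := by
    have := posDef_mul_mul_conjTranspose hX
      ((Matrix.isUnit_nonsing_inv_iff).mpr hRunit)
    rw [hRinv_herm.eq] at this
    exact this
  set Z := R⁻¹ * X * R⁻¹ with hZdef
  -- determinant relation : det Z * det Y = det X
  have hdetZ : Z.det * Y.det = X.det := by
    have hri : R⁻¹.det * R.det = 1 := det_nonsing_inv_mul_det R hRdet
    have : Z.det = R⁻¹.det * X.det * R⁻¹.det := by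
      rw [hZdef, det_mul, det_mul]
    rw [this, ← hRR, det_mul]
    linear_combination (R⁻¹.det * R.det + 1) * X.det * hri
  obtain ⟨hxpos, hxeq⟩ := posDef_det_re hX
  obtain ⟨hypos, hyeq⟩ := posDef_det_re hY
  obtain ⟨hzpos, hzeq⟩ := posDef_det_re hZ
  have hreal : Z.det.re * Y.det.re = X.det.re := by
    have : ((Z.det.re * Y.det.re : ℝ) : ℂ) = ((X.det.re : ℝ) : ℂ) := by
      push_cast
      rw [← hxeq, ← hyeq, ← hzeq, hdetZ]
    exact_mod_cast this
  -- trace relation: trace Z = trace (Y⁻¹ * X)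
  have htr : Z.trace = (Y⁻¹ * X).trace := by
    rw [hZdef, trace_mul_cycle]
    congr 1
    rw [← hRR, Matrix.mul_inv_rev]
  -- eigenvalue bounds
  have heig : Z.det = ∏ i, (hZ.1.eigenvalues i : ℂ) := hZ.1.det_eq_prod_eigenvalues
  have hzre : Z.det.re = ∏ i, hZ.1.eigenvalues i := by
    have : ((∏ i, hZ.1.eigenvalues i : ℝ) : ℂ) = Z.det := by
      rw [heig]; push_cast; rfl
    rw [← this, Complex.ofReal_re]
  have htrre : Z.trace.re = ∑ i, hZ.1.eigenvalues i := by
    have : Z.trace = ((∑ i, hZ.1.eigenvalues i : ℝ) : ℂ) := by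
      rw [trace_eq_sum_eigenvalues hZ.1]; push_cast; rfl
    rw [this, Complex.ofReal_re]
  have hlogZ : Real.log Z.det.re ≤ Z.trace.re - m := by
    rw [hzre, htrre, Real.log_prod (fun i _ => (hZ.eigenvalues_pos i).ne')]
    calc ∑ i, Real.log (hZ.1.eigenvalues i)
        ≤ ∑ i, (hZ.1.eigenvalues i - 1) :=
          Finset.sum_le_sum fun i _ =>
            Real.log_le_sub_one_of_pos (hZ.eigenvalues_pos i)
      _ = (∑ i, hZ.1.eigenvalues i) - m := by
          rw [Finset.sum_sub_distrib]; simp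
  -- trace of Y⁻¹ (X - Y)
  have htr2 : (Matrix.trace (Y⁻¹ * (X - Y))).re = (Y⁻¹ * X).trace.re - m := by
    have : Y⁻¹ * (X - Y) = Y⁻¹ * X - 1 := by
      rw [Matrix.mul_sub, Matrix.nonsing_inv_mul Y hYdet]
    rw [this, trace_sub, trace_one]
    simp
  have hlogx : Real.log X.det.re = Real.log Z.det.re + Real.log Y.det.re := by
    rw [← hreal, Real.log_mul hzpos.ne' hypos.ne']
  rw [hlogx, htr2, ← htr]
  linarith

/-- Lemma 1 (log-det linearization upper bound): for a positive definite Hermitian `A`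
and positive semidefinite Hermitian `B j`, `B' j`,
`ln det(A + ∑ C_j B_j C_jᴴ) ≤ ln det(A + ∑ C_j B'_j C_jᴴ)
  + ∑_j Re Tr(C_jᴴ (A + ∑_l C_l B'_l C_lᴴ)⁻¹ C_j (B_j − B'_j))`. -/
theorem logdet_linearization_upper_bound
    (n J : ℕ) (nj : Fin J → ℕ)
    (A : Matrix (Fin n) (Fin n) ℂ) (hA : A.PosDef)
    (B B' : ∀ j : Fin J, Matrix (Fin (nj j)) (Fin (nj j)) ℂ)
    (hB : ∀ j, (B j).PosSemidef) (hB' : ∀ j, (B' j).PosSemidef)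
    (C : ∀ j : Fin J, Matrix (Fin n) (Fin (nj j)) ℂ) :
    Real.log ((A + ∑ j, C j * B j * (C j)ᴴ).det.re)
      ≤ Real.log ((A + ∑ j, C j * B' j * (C j)ᴴ).det.re)
        + ∑ j, (Matrix.trace ((C j)ᴴ * (A + ∑ l, C l * B' l * (C l)ᴴ)⁻¹ * C j
            * (B j - B' j))).re := by
  classical
  set X := A + ∑ j, C j * B j * (C j)ᴴ with hXdef
  set Y := A + ∑ j, C j * B' j * (C j)ᴴ with hYdef
  have hsum : ∀ (D : ∀ j : Fin J, Matrix (Fin (nj j)) (Fin (nj j)) ℂ)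
      (hD : ∀ j, (D j).PosSemidef), (∑ j, C j * D j * (C j)ᴴ).PosSemidef := by
    intro D hD
    apply Finset.sum_induction _ _ (fun a b ha hb => ha.add hb) .zero
    intro j _
    exact (hD j).mul_mul_conjTranspose_same (C j)
  have hX : X.PosDef := hA.add_posSemidef (hsum B hB)
  have hY : Y.PosDef := hA.add_posSemidef (hsum B' hB')
  have key := logdet_key hX hY
  refine key.trans (le_of_eq ?_)
  congr 1
  have hXY : X - Y = ∑ j, C j * (B j - B' j) * (C j)ᴴ := by
    rw [hXdef, hYdef, add_sub_add_left_eq_sub, ← Finset.sum_sub_distrib]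
    congr 1
    funext j
    rw [Matrix.mul_sub, Matrix.sub_mul]
  rw [hXY, Matrix.mul_sum, trace_sum, Complex.re_sum]
  apply Finset.sum_congr rfl
  intro j _
  congr 1
  rw [show Y⁻¹ * (C j * (B j - B' j) * (C j)ᴴ)
      = (Y⁻¹ * (C j * (B j - B' j))) * (C j)ᴴ from (Matrix.mul_assoc _ _ _).symm,
    trace_mul_comm, ← Matrix.mul_assoc, ← Matrix.mul_assoc]
end

section
/- Let V and V̄ be n×m complex matrices, and let Y and Ȳ be n×n positive definite Hermitian complex matrices. Then ln det(I + V V^H Y^{-1}) ≥ ln det(I + V̄ V̄^H Ȳ^{-1}) − Tr(V̄ V̄^H Ȳ^{-1}) + 2 Re Tr(V̄^H Ȳ^{-1} V) − Tr( (Ȳ^{-1} − (V̄ V̄^H + Ȳ)^{-1})^H (V V^H + Y) ). -/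
open Matrix
open scoped ComplexOrder

namespace LogDetAux

variable {k : Type*} [Fintype k] [DecidableEq k]

lemma trace_eq_sum_eigenvalues {P : Matrix k k ℂ} (hP : P.IsHermitian) :
    P.trace = ∑ i, (hP.eigenvalues i : ℂ) := by
  exact hP.trace_eq_sum_eigenvalues

lemma trace_re_nonneg {P : Matrix k k ℂ} (hP : P.PosSemidef) : 0 ≤ P.trace.re := by
  rw [trace_eq_sum_eigenvalues hP.1]
  have : (∑ i, (hP.1.eigenvalues i : ℂ)) = ((∑ i, hP.1.eigenvalues i : ℝ) : ℂ) := by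
    push_cast; rfl
  rw [this, Complex.ofReal_re]
  exact Finset.sum_nonneg fun i _ => hP.eigenvalues_nonneg i

lemma log_det_re_le {P : Matrix k k ℂ} (hP : P.PosDef) :
    Real.log P.det.re ≤ P.trace.re - Fintype.card k := by
  have hdet : P.det = ((∏ i, hP.1.eigenvalues i : ℝ) : ℂ) := by
    rw [hP.1.det_eq_prod_eigenvalues]; push_cast; rfl
  have htr : P.trace = ((∑ i, hP.1.eigenvalues i : ℝ) : ℂ) := by
    rw [trace_eq_sum_eigenvalues hP.1]; push_cast; rfl
  rw [hdet, htr, Complex.ofReal_re, Complex.ofReal_re,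
    Real.log_prod (fun i _ => (hP.eigenvalues_pos i).ne')]
  have h1 : ∑ i, Real.log (hP.1.eigenvalues i) ≤ ∑ i, (hP.1.eigenvalues i - 1) :=
    Finset.sum_le_sum fun i _ => Real.log_le_sub_one_of_pos (hP.eigenvalues_pos i)
  simpa [Finset.sum_sub_distrib] using h1

lemma posDef_conj {Q S : Matrix k k ℂ} (hQ : Q.PosDef) (hS : S.IsHermitian)
    (hinj : ∀ x, S *ᵥ x = 0 → x = 0) : (S * Q * S).PosDef := by
  have hSQS : S * Q * S = Sᴴ * Q * S := by rw [hS.eq]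
  refine Matrix.PosDef.of_dotProduct_mulVec_pos ?_ fun x hx => ?_
  · rw [hSQS]; exact Matrix.isHermitian_conjTranspose_mul_mul S hQ.1
  · 
    have hx' : S *ᵥ x ≠ 0 := fun h => hx (hinj x h)
    rw [hSQS]
    simpa only [star_mulVec, dotProduct_mulVec, vecMul_vecMul] using hQ.dotProduct_mulVec_pos hx'

lemma log_helper {a b : ℂ} (ha : 0 < a) (hb : 0 < b) (h : a * b = 1) :
    Real.log b.re = -Real.log a.re := by
  obtain ⟨hare, haim⟩ := Complex.pos_iff.mp ha
  obtain ⟨hbre, hbim⟩ := Complex.pos_iff.mp hb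
  have hre : a.re * b.re = 1 := by
    have := congrArg Complex.re h
    simpa [Complex.mul_re, ← haim, ← hbim] using this
  have hb' : b.re = (a.re)⁻¹ := by
    field_simp
    linarith [hre]
  rw [hb', Real.log_inv]

lemma re_mul_of_pos {a b : ℂ} (ha : 0 < a) (hb : 0 < b) : (a * b).re = a.re * b.re := by
  obtain ⟨_, haim⟩ := Complex.pos_iff.mp ha
  simp [Complex.mul_re, ← haim]

open scoped MatrixOrder in
lemma exists_sqrt' {W : Matrix k k ℂ} (hW : W.PosSemidef) :
    ∃ s : Matrix k k ℂ, s.PosSemidef ∧ s * s = W :=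
  ⟨CFC.sqrt W, (CFC.sqrt_nonneg W).posSemidef, CFC.sqrt_mul_sqrt_self W hW.nonneg⟩

end LogDetAux

open LogDetAux

/-- Lemma 2 (log-det lower bound used for the RIS update):
`ln det(I + V Vᴴ Y⁻¹) ≥ ln det(I + V̄ V̄ᴴ Ȳ⁻¹) − Tr(V̄ V̄ᴴ Ȳ⁻¹)
  + 2 Re Tr(V̄ᴴ Ȳ⁻¹ V) − Tr((Ȳ⁻¹ − (V̄ V̄ᴴ + Ȳ)⁻¹)ᴴ (V Vᴴ + Y))`. -/
theorem logdet_lower_bound_lemma2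
    (n m : ℕ)
    (V Vbar : Matrix (Fin n) (Fin m) ℂ)
    (Y Ybar : Matrix (Fin n) (Fin n) ℂ)
    (hY : Y.PosDef) (hYbar : Ybar.PosDef) :
    Real.log ((1 + V * Vᴴ * Y⁻¹).det.re)
      ≥ Real.log ((1 + Vbar * Vbarᴴ * Ybar⁻¹).det.re)
        - (Matrix.trace (Vbar * Vbarᴴ * Ybar⁻¹)).re
        + 2 * (Matrix.trace (Vbarᴴ * Ybar⁻¹ * V)).re
        - (Matrix.trace ((Ybar⁻¹ - (Vbar * Vbarᴴ + Ybar)⁻¹)ᴴ * (V * Vᴴ + Y))).re := by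
  have hYu : IsUnit Y.det := hY.det_pos.ne'.isUnit
  have hYbu : IsUnit Ybar.det := hYbar.det_pos.ne'.isUnit
  set A := V * Vᴴ + Y with hAdef
  set Ab := Vbar * Vbarᴴ + Ybar with hAbdef
  have hA : A.PosDef := by
    rw [hAdef]; exact Matrix.PosDef.posSemidef_add (Matrix.posSemidef_self_mul_conjTranspose V) hY
  have hAb : Ab.PosDef := by
    rw [hAbdef]
    exact Matrix.PosDef.posSemidef_add (Matrix.posSemidef_self_mul_conjTranspose Vbar) hYbar
  have hAu : IsUnit A.det := hA.det_pos.ne'.isUnit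
  have hAbu : IsUnit Ab.det := hAb.det_pos.ne'.isUnit
  set F := 1 + Vᴴ * Y⁻¹ * V with hFdef
  set W := 1 + Vbarᴴ * Ybar⁻¹ * Vbar with hWdef
  have hF : F.PosDef := by
    rw [hFdef]
    exact Matrix.PosDef.add_posSemidef Matrix.PosDef.one
      ((hY.inv.posSemidef).conjTranspose_mul_mul_same V)
  have hW : W.PosDef := by
    rw [hWdef]
    exact Matrix.PosDef.add_posSemidef Matrix.PosDef.one
      ((hYbar.inv.posSemidef).conjTranspose_mul_mul_same Vbar)
  have hWu : IsUnit W.det := hW.det_pos.ne'.isUnit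
  set B := Ybar⁻¹ * Vbar with hBdef
  have hBH : Bᴴ = Vbarᴴ * Ybar⁻¹ := by
    rw [hBdef, conjTranspose_mul, hYbar.isHermitian.inv.eq]
  set U := B * W⁻¹ with hUdef
  set Em := (1 : Matrix (Fin m) (Fin m) ℂ) - Vᴴ * A⁻¹ * V with hEmdef
  set EU := (1 : Matrix (Fin m) (Fin m) ℂ) - Uᴴ * V - Vᴴ * U + Uᴴ * A * U with hEUdef
  have hiAA : A⁻¹ * A = 1 := Matrix.nonsing_inv_mul A hAu
  have hAiA : A * A⁻¹ = 1 := Matrix.mul_nonsing_inv A hAu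
  have hYiY : Y * Y⁻¹ = 1 := Matrix.mul_nonsing_inv Y hYu
  have hYbiYb : Ybar * Ybar⁻¹ = 1 := Matrix.mul_nonsing_inv Ybar hYbu
  have hWiW : W * W⁻¹ = 1 := Matrix.mul_nonsing_inv W hWu
  have hiWW : W⁻¹ * W = 1 := Matrix.nonsing_inv_mul W hWu
  -- Em * F = 1
  have key1 : A * (Y⁻¹ * V) = V + V * (Vᴴ * (Y⁻¹ * V)) := by
    rw [hAdef, Matrix.add_mul, Matrix.mul_assoc V Vᴴ (Y⁻¹ * V), ← Matrix.mul_assoc Y Y⁻¹ V,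
      hYiY, Matrix.one_mul, add_comm]
  have hEmF : Em * F = 1 := by
    have key2 : Vᴴ * (A⁻¹ * V) + Vᴴ * (A⁻¹ * (V * (Vᴴ * (Y⁻¹ * V)))) = Vᴴ * (Y⁻¹ * V) := by
      rw [← Matrix.mul_add, ← Matrix.mul_add, ← key1, ← Matrix.mul_assoc A⁻¹ A (Y⁻¹ * V),
        hiAA, Matrix.one_mul]
    have expand : Em * F = 1 + Vᴴ * (Y⁻¹ * V)
        - (Vᴴ * (A⁻¹ * V) + Vᴴ * (A⁻¹ * (V * (Vᴴ * (Y⁻¹ * V))))) := by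
      rw [hEmdef, hFdef]
      simp only [Matrix.mul_add, Matrix.add_mul, Matrix.sub_mul, Matrix.mul_sub,
        Matrix.mul_one, Matrix.one_mul, Matrix.mul_assoc]
      abel
    rw [expand, key2]
    abel
  have hEmFinv : F⁻¹ = Em := Matrix.inv_eq_left_inv hEmF
  have hEm : Em.PosDef := by rw [← hEmFinv]; exact hF.inv
  -- determinant identities
  have hdetF : (1 + V * Vᴴ * Y⁻¹).det = F.det := by
    rw [Matrix.mul_assoc, Matrix.det_one_add_mul_comm, hFdef]
  have hdetW : (1 + Vbar * Vbarᴴ * Ybar⁻¹).det = W.det := by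
    rw [Matrix.mul_assoc, Matrix.det_one_add_mul_comm, hWdef]
  have hdetprod : Em.det * F.det = 1 := by
    rw [← Matrix.det_mul, hEmF, Matrix.det_one]
  have hlogF : Real.log F.det.re = -Real.log Em.det.re :=
    log_helper hEm.det_pos hF.det_pos hdetprod
  -- sqrt of W
  obtain ⟨sW, hsWps, hsW2⟩ := exists_sqrt' hW.posSemidef
  have hsWH : sW.IsHermitian := hsWps.1
  have hsWinj : ∀ x, sW *ᵥ x = 0 → x = 0 := by
    intro x hx
    by_contra hx0
    have h1 : W *ᵥ x = 0 := by
      rw [← hsW2, ← Matrix.mulVec_mulVec, hx, Matrix.mulVec_zero]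
    have h2 := hW.dotProduct_mulVec_pos hx0
    rw [h1, dotProduct_zero] at h2
    exact lt_irrefl _ h2
  have hP : (sW * Em * sW).PosDef := posDef_conj hEm hsWH hsWinj
  have hPdet : (sW * Em * sW).det = W.det * Em.det := by
    rw [Matrix.det_mul, Matrix.det_mul, ← hsW2, Matrix.det_mul]; ring
  have hPtr : (sW * Em * sW).trace = (W * Em).trace := by
    rw [Matrix.trace_mul_cycle sW Em sW, hsW2]
  have hWdre : 0 < W.det.re := (Complex.pos_iff.mp hW.det_pos).1
  have hEmdre : 0 < Em.det.re := (Complex.pos_iff.mp hEm.det_pos).1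
  have hkey5 : Real.log W.det.re + Real.log Em.det.re ≤ (W * Em).trace.re - m := by
    have h := log_det_re_le hP
    rw [hPdet, hPtr, re_mul_of_pos hW.det_pos hEm.det_pos,
      Real.log_mul hWdre.ne' hEmdre.ne'] at h
    simpa using h
  -- trace comparison via K
  set K := U - A⁻¹ * V with hKdef
  have hKH : Kᴴ = Uᴴ - Vᴴ * A⁻¹ := by
    rw [hKdef]
    simp only [conjTranspose_sub, conjTranspose_mul, hA.isHermitian.inv.eq,
      hW.isHermitian.inv.eq, hYbar.isHermitian.inv.eq]
  have hAK : A * K = A * U - V := by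
    rw [hKdef, Matrix.mul_sub, ← Matrix.mul_assoc A A⁻¹ V, hAiA, Matrix.one_mul]
  have hEUEm : EU - Em = Kᴴ * A * K := by
    have e1 : Kᴴ * (A * K) = Uᴴ * (A * U) - Uᴴ * V - Vᴴ * U + Vᴴ * (A⁻¹ * V) := by
      rw [hAK, hKH]
      simp only [Matrix.sub_mul, Matrix.mul_sub, Matrix.mul_assoc]
      rw [← Matrix.mul_assoc A⁻¹ A U, hiAA, Matrix.one_mul]
      abel
    rw [hEUdef, hEmdef, Matrix.mul_assoc Kᴴ A K, e1,
      Matrix.mul_assoc Uᴴ A U, Matrix.mul_assoc Vᴴ A⁻¹ V]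
    abel
  have htrsum : (W * EU).trace = (W * Em).trace + ((K * sW)ᴴ * A * (K * sW)).trace := by
    have e1 : (K * sW)ᴴ * A * (K * sW) = sW * (EU - Em) * sW := by
      rw [hEUEm, conjTranspose_mul, hsWH.eq]
      simp only [Matrix.mul_assoc]
    have h7 : Em + (EU - Em) = EU := by abel
    rw [e1, Matrix.trace_mul_cycle sW (EU - Em) sW, hsW2, ← Matrix.trace_add,
      ← Matrix.mul_add, h7]
  have htr_le : (W * Em).trace.re ≤ (W * EU).trace.re := by
    have hpos := trace_re_nonneg (hA.posSemidef.conjTranspose_mul_mul_same (K * sW))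
    have h := congrArg Complex.re htrsum
    rw [Complex.add_re] at h
    linarith
  -- trace of W * EU
  have hUHH : Uᴴ = W⁻¹ * Bᴴ := by
    rw [hUdef]
    simp only [conjTranspose_mul, hW.isHermitian.inv.eq, hYbar.isHermitian.inv.eq]
  have hUH : W * Uᴴ = Bᴴ := by rw [hUHH, ← Matrix.mul_assoc W W⁻¹ Bᴴ, hWiW, Matrix.one_mul]
  have hUW : U * W = B := by rw [hUdef, Matrix.mul_assoc B W⁻¹ W, hiWW, Matrix.mul_one]
  have hAbB : Ab * B = Vbar * W := by
    rw [hAbdef, hBdef, hWdef]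
    simp only [Matrix.add_mul, Matrix.mul_add, Matrix.mul_one, Matrix.mul_assoc]
    rw [← Matrix.mul_assoc Ybar Ybar⁻¹ Vbar, hYbiYb, Matrix.one_mul]
    abel
  have hwood : B * (W⁻¹ * Bᴴ) = Ybar⁻¹ - Ab⁻¹ := by
    have h2 : Ab * (Ybar⁻¹ - B * (W⁻¹ * Bᴴ)) = 1 := by
      rw [Matrix.mul_sub, ← Matrix.mul_assoc Ab B (W⁻¹ * Bᴴ), hAbB,
        Matrix.mul_assoc Vbar W (W⁻¹ * Bᴴ), ← Matrix.mul_assoc W W⁻¹ Bᴴ, hWiW, Matrix.one_mul, hBH,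
        hAbdef, Matrix.add_mul, Matrix.mul_assoc Vbar Vbarᴴ Ybar⁻¹, hYbiYb]
      abel
    have h3 : Ab⁻¹ = Ybar⁻¹ - B * (W⁻¹ * Bᴴ) := Matrix.inv_eq_right_inv h2
    rw [h3]
    abel
  have hUBH : U * Bᴴ = Ybar⁻¹ - Ab⁻¹ := by
    rw [hUdef, Matrix.mul_assoc B W⁻¹ Bᴴ, hwood]
  have e4 : (W * (Vᴴ * U)).trace = (Vᴴ * B).trace := by
    rw [Matrix.trace_mul_comm, Matrix.mul_assoc Vᴴ U W, hUW]
  have e5 : (W * (Uᴴ * (A * U))).trace = ((Ybar⁻¹ - Ab⁻¹) * A).trace := by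
    rw [← Matrix.mul_assoc W Uᴴ (A * U), hUH, Matrix.trace_mul_comm,
      Matrix.mul_assoc A U Bᴴ, hUBH, Matrix.trace_mul_comm]
  have hWEU : (W * EU).trace
      = W.trace - (Bᴴ * V).trace - (Vᴴ * B).trace + ((Ybar⁻¹ - Ab⁻¹) * A).trace := by
    have e0 : W * EU = W - W * (Uᴴ * V) - W * (Vᴴ * U) + W * (Uᴴ * (A * U)) := by
      rw [hEUdef]
      simp only [Matrix.mul_sub, Matrix.mul_add, Matrix.mul_one, Matrix.mul_assoc]
    have e6 : (W * (Uᴴ * V)).trace = (Bᴴ * V).trace := by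
      rw [← Matrix.mul_assoc W Uᴴ V, hUH]
    rw [e0, Matrix.trace_add, Matrix.trace_sub, Matrix.trace_sub, e4, e5, e6]
  have hWtr : W.trace = (m : ℂ) + (Vbar * Vbarᴴ * Ybar⁻¹).trace := by
    rw [hWdef, Matrix.trace_add, Matrix.trace_one,
      Matrix.trace_mul_cycle Vbarᴴ Ybar⁻¹ Vbar]
    simp [Fintype.card_fin]
  have hBV : (Bᴴ * V).trace = (Vbarᴴ * Ybar⁻¹ * V).trace := by rw [hBH]
  have hVB : (Vᴴ * B).trace = star ((Bᴴ * V).trace) := by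
    rw [← Matrix.trace_conjTranspose, conjTranspose_mul, conjTranspose_conjTranspose]
  have hHerm : (Ybar⁻¹ - Ab⁻¹)ᴴ = Ybar⁻¹ - Ab⁻¹ := by
    rw [conjTranspose_sub, hYbar.isHermitian.inv.eq, hAb.isHermitian.inv.eq]
  have hWEUre : (W * EU).trace.re
      = m + (Vbar * Vbarᴴ * Ybar⁻¹).trace.re - 2 * (Vbarᴴ * Ybar⁻¹ * V).trace.re
        + ((Ybar⁻¹ - Ab⁻¹) * A).trace.re := by
    rw [hWtr, hVB, hBV] at hWEU
    have h := congrArg Complex.re hWEU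
    simp only [Complex.add_re, Complex.sub_re, Complex.natCast_re] at h
    rw [h]
    have hstar : (star ((Vbarᴴ * Ybar⁻¹ * V).trace)).re
        = ((Vbarᴴ * Ybar⁻¹ * V).trace).re := by
      simp [Complex.star_def]
    rw [hstar]; ring
  rw [ge_iff_le, hdetF, hdetW, hHerm, hlogF]
  linarith [hkey5, htr_le, hWEUre]
end

section
/- Fix a user index k among K users, let H be an N_U×N_BS complex channel matrix, σ > 0 a noise level, and for j = 1,…,K let P_j and P_j' be N_BS×N_BS positive semidefinite Hermitian complex matrices (the new transmit covariance matrices and the fixed-point covariance matrices). Define D({P}) = σ²I + Σ_{j≠k} H P_j H^H, S({P}) = H P_k H^H, r₁({P}) = log₂ det(D({P}) + S({P})), r₂({P}) = log₂ det(D({P})), and the per-subband rate r({P}) = r₁({P}) − r₂({P}). Then r({P}) ≥ r₁({P}) − r₂({P'}) − (1/ln 2) Σ_{j≠k} Re Tr( H^H (D({P'}))^{-1} H (P_j − P_j') ). -/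
open Matrix
open scoped ComplexOrder

section Aux

variable {n : Type*} [Fintype n] [DecidableEq n]

private lemma trace_eq_sum_eigenvalues' {A : Matrix n n ℂ} (hA : A.IsHermitian) :
    A.trace = ∑ i, (hA.eigenvalues i : ℂ) := by
  exact hA.trace_eq_sum_eigenvalues

private lemma posDef_det_eq {A : Matrix n n ℂ} (hA : A.PosDef) :
    A.det = ((A.det.re : ℝ) : ℂ) ∧ 0 < A.det.re := by
  have h1 : A.det = ((∏ i, hA.1.eigenvalues i : ℝ) : ℂ) := by
    rw [hA.1.det_eq_prod_eigenvalues]; push_cast; rfl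
  have h2 : (0 : ℝ) < ∏ i, hA.1.eigenvalues i :=
    Finset.prod_pos fun i _ => hA.eigenvalues_pos i
  have h3 : A.det.re = ∏ i, hA.1.eigenvalues i := by rw [h1, Complex.ofReal_re]
  exact ⟨by rw [h3, ← h1], h3 ▸ h2⟩

/-- `log det C ≤ tr C − n` for positive definite `C`. -/
private lemma log_det_le_trace {C : Matrix n n ℂ} (hC : C.PosDef) :
    Real.log C.det.re ≤ C.trace.re - Fintype.card n := by
  have hdetC : C.det = ((∏ i, hC.1.eigenvalues i : ℝ) : ℂ) := by
    rw [hC.1.det_eq_prod_eigenvalues]; push_cast; rfl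
  have htrC : C.trace = ((∑ i, hC.1.eigenvalues i : ℝ) : ℂ) := by
    rw [trace_eq_sum_eigenvalues' hC.1]; push_cast; rfl
  have hdet : C.det.re = ∏ i, hC.1.eigenvalues i := by rw [hdetC, Complex.ofReal_re]
  have htr : C.trace.re = ∑ i, hC.1.eigenvalues i := by rw [htrC, Complex.ofReal_re]
  rw [hdet, htr, Real.log_prod (fun i _ => (hC.eigenvalues_pos i).ne')]
  have hle : ∑ i, Real.log (hC.1.eigenvalues i) ≤ ∑ i, (hC.1.eigenvalues i - 1) :=
    Finset.sum_le_sum fun i _ => Real.log_le_sub_one_of_pos (hC.eigenvalues_pos i)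
  calc ∑ i, Real.log (hC.1.eigenvalues i) ≤ ∑ i, (hC.1.eigenvalues i - 1) := hle
    _ = (∑ i, hC.1.eigenvalues i) - Fintype.card n := by
        rw [Finset.sum_sub_distrib]; simp [Finset.card_univ]

private lemma posDef_conj {A M : Matrix n n ℂ} (hA : A.PosDef) (hM : IsUnit M.det) :
    (Mᴴ * A * M).PosDef := by
  refine Matrix.PosDef.of_dotProduct_mulVec_pos (Matrix.isHermitian_conjTranspose_mul_mul M hA.1) fun x hx => ?_
  have hMx : M *ᵥ x ≠ 0 := by
    have hinj : Function.Injective (M.mulVec) := Matrix.mulVec_injective_iff_isUnit.mpr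
      ((Matrix.isUnit_iff_isUnit_det M).mpr hM)
    intro h
    exact hx (hinj (by simpa using h))
  have := hA.dotProduct_mulVec_pos hMx
  simpa only [star_mulVec, Matrix.dotProduct_mulVec, Matrix.vecMul_vecMul] using this

open scoped MatrixOrder in
/-- `log det A − log det B ≤ Re tr(B⁻¹ A) − n` for positive definite `A`, `B`. -/
private lemma log_det_sub_le {A B : Matrix n n ℂ} (hA : A.PosDef) (hB : B.PosDef) :
    Real.log A.det.re - Real.log B.det.re ≤ (B⁻¹ * A).trace.re - Fintype.card n := by
  have hBi : (B⁻¹).PosDef := hB.inv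
  set S := CFC.sqrt B⁻¹ with hSdef
  have hSps : S.PosSemidef := Matrix.nonneg_iff_posSemidef.mp (CFC.sqrt_nonneg _)
  have hSS : S * S = B⁻¹ := CFC.sqrt_mul_sqrt_self _ (Matrix.nonneg_iff_posSemidef.mpr hBi.posSemidef)
  have hSdet : IsUnit S.det := by
    have : S.det * S.det = B⁻¹.det := by rw [← Matrix.det_mul, hSS]
    have hBidet : B⁻¹.det ≠ 0 := hBi.det_pos.ne'
    have hS0 : S.det ≠ 0 := by
      intro h; apply hBidet; rw [← this, h, mul_zero]
    exact hS0.isUnit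
  have hC : (S * A * S).PosDef := by
    have := posDef_conj hA hSdet
    rwa [hSps.1] at this
  have htr : (S * A * S).trace = (B⁻¹ * A).trace := by
    rw [Matrix.trace_mul_comm, ← Matrix.mul_assoc, hSS]
  have hdetC : (S * A * S).det = B⁻¹.det * A.det := by
    rw [Matrix.det_mul, Matrix.det_mul, ← hSS, Matrix.det_mul]; ring
  -- express everything with real determinants
  obtain ⟨hAre, hApos⟩ := posDef_det_eq hA
  obtain ⟨hBre, hBpos⟩ := posDef_det_eq hB
  obtain ⟨hCre, hCpos⟩ := posDef_det_eq hC
  have hBidet : B⁻¹.det = (((B.det.re)⁻¹ : ℝ) : ℂ) := by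
    rw [Matrix.det_nonsing_inv, Ring.inverse_eq_inv']
    conv_lhs => rw [hBre]
    rw [← Complex.ofReal_inv]
  have hCval : (S * A * S).det.re = (B.det.re)⁻¹ * A.det.re := by
    conv_lhs => rw [hdetC, hBidet]
    conv_lhs => rw [hAre]
    rw [← Complex.ofReal_mul, Complex.ofReal_re]
  have key := log_det_le_trace hC
  rw [hCval, htr] at key
  calc Real.log A.det.re - Real.log B.det.re
      = Real.log ((B.det.re)⁻¹ * A.det.re) := by
        rw [Real.log_mul (by positivity) hApos.ne', Real.log_inv]; ring
    _ ≤ (B⁻¹ * A).trace.re - Fintype.card n := key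

end Aux

/-- Corollary 1 (concave lower bound on the per-subband TIN rate of user `k`):
with `D({P}) = σ²I + ∑_{j≠k} H P_j Hᴴ`, `S({P}) = H P_k Hᴴ`,
`r = log₂ det(D + S) − log₂ det D`, one has
`r({P}) ≥ r₁({P}) − r₂({P'}) − (1/ln 2) ∑_{j≠k} Re Tr(Hᴴ D({P'})⁻¹ H (P_j − P'_j))`. -/
theorem rate_lower_bound_covariance_update
    (NU NBS K : ℕ) (k : Fin K)
    (H : Matrix (Fin NU) (Fin NBS) ℂ)
    (σ : ℝ) (hσ : 0 < σ)
    (P P' : Fin K → Matrix (Fin NBS) (Fin NBS) ℂ)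
    (hP : ∀ j, (P j).PosSemidef) (hP' : ∀ j, (P' j).PosSemidef) :
    Real.logb 2 ((((σ ^ 2 : ℂ) • (1 : Matrix (Fin NU) (Fin NU) ℂ)
            + ∑ j ∈ Finset.univ.erase k, H * P j * Hᴴ) + H * P k * Hᴴ).det.re)
      - Real.logb 2 (((σ ^ 2 : ℂ) • (1 : Matrix (Fin NU) (Fin NU) ℂ)
            + ∑ j ∈ Finset.univ.erase k, H * P j * Hᴴ).det.re)
    ≥ Real.logb 2 ((((σ ^ 2 : ℂ) • (1 : Matrix (Fin NU) (Fin NU) ℂ)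
            + ∑ j ∈ Finset.univ.erase k, H * P j * Hᴴ) + H * P k * Hᴴ).det.re)
      - Real.logb 2 (((σ ^ 2 : ℂ) • (1 : Matrix (Fin NU) (Fin NU) ℂ)
            + ∑ j ∈ Finset.univ.erase k, H * P' j * Hᴴ).det.re)
      - (1 / Real.log 2) * ∑ j ∈ Finset.univ.erase k,
          (Matrix.trace (Hᴴ * ((σ ^ 2 : ℂ) • (1 : Matrix (Fin NU) (Fin NU) ℂ)
              + ∑ l ∈ Finset.univ.erase k, H * P' l * Hᴴ)⁻¹ * H
              * (P j - P' j))).re := by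
  set I1 : Matrix (Fin NU) (Fin NU) ℂ := 1 with hI1
  set D : Matrix (Fin NU) (Fin NU) ℂ :=
    (σ ^ 2 : ℂ) • I1 + ∑ j ∈ Finset.univ.erase k, H * P j * Hᴴ with hD
  set D' : Matrix (Fin NU) (Fin NU) ℂ :=
    (σ ^ 2 : ℂ) • I1 + ∑ j ∈ Finset.univ.erase k, H * P' j * Hᴴ with hD'
  -- positive definiteness
  have hsmul : ((σ ^ 2 : ℂ) • I1).PosDef := by
    rw [hI1, Matrix.smul_one_eq_diagonal]
    refine Matrix.PosDef.diagonal fun i => ?_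
    have : ((σ ^ 2 : ℝ) : ℂ) = (σ ^ 2 : ℂ) := by push_cast; ring
    rw [← this]
    exact Complex.zero_lt_real.mpr (by positivity)
  have hsum : ∀ (Q : Fin K → Matrix (Fin NBS) (Fin NBS) ℂ),
      (∀ j, (Q j).PosSemidef) →
      (∑ j ∈ Finset.univ.erase k, H * Q j * Hᴴ).PosSemidef := by
    intro Q hQ
    refine Finset.sum_induction _ _ (fun a b ha hb => ha.add hb) Matrix.PosSemidef.zero ?_
    exact fun j _ => (hQ j).mul_mul_conjTranspose_same H
  have hDpos : D.PosDef := hsmul.add_posSemidef (hsum P hP)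
  have hD'pos : D'.PosDef := hsmul.add_posSemidef (hsum P' hP')
  -- reduce the goal to an inequality between r₂ terms
  rw [ge_iff_le, sub_sub, sub_le_sub_iff_left, ← sub_le_iff_le_add']
  -- rewrite the trace sum
  have htrace : ∑ j ∈ Finset.univ.erase k,
      (Matrix.trace (Hᴴ * D'⁻¹ * H * (P j - P' j))).re
      = (D'⁻¹ * D).trace.re - NU := by
    have hstep : ∀ j, Matrix.trace (Hᴴ * D'⁻¹ * H * (P j - P' j))
        = Matrix.trace (D'⁻¹ * (H * (P j - P' j) * Hᴴ)) := by
      intro j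
      rw [show Hᴴ * D'⁻¹ * H * (P j - P' j) = Hᴴ * (D'⁻¹ * (H * (P j - P' j))) by
        simp [Matrix.mul_assoc]]
      rw [Matrix.trace_mul_comm]
      simp [Matrix.mul_assoc]
    have hsum_eq : ∑ j ∈ Finset.univ.erase k, Matrix.trace (Hᴴ * D'⁻¹ * H * (P j - P' j))
        = Matrix.trace (D'⁻¹ * (D - D')) := by
      simp_rw [hstep, ← Matrix.trace_sum, ← Finset.mul_sum]
      congr 2
      rw [hD, hD']
      rw [add_sub_add_left_eq_sub, ← Finset.sum_sub_distrib]
      congr 1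
      ext j
      simp [Matrix.mul_sub, Matrix.sub_mul]
    have hinv : D'⁻¹ * D' = 1 := Matrix.nonsing_inv_mul D' hD'pos.det_pos.ne'.isUnit
    have : Matrix.trace (D'⁻¹ * (D - D')) = Matrix.trace (D'⁻¹ * D) - (NU : ℂ) := by
      rw [Matrix.mul_sub, Matrix.trace_sub, hinv, Matrix.trace_one]
      simp
    rw [← Complex.re_sum, hsum_eq, this]
    simp
  rw [htrace]
  -- apply the key inequality
  have key := log_det_sub_le hDpos hD'pos
  rw [Fintype.card_fin] at key
  have hlog2 : (0 : ℝ) < Real.log 2 := Real.log_pos (by norm_num)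
  rw [Real.logb, Real.logb, div_sub_div_same, div_le_iff₀ hlog2]
  calc Real.log D.det.re - Real.log D'.det.re
      ≤ (D'⁻¹ * D).trace.re - NU := key
    _ = (1 / Real.log 2) * ((D'⁻¹ * D).trace.re - ↑NU) * Real.log 2 := by
        field_simp
end

section
/- Let H and H̄ be N_U×N_BS complex matrices (the channel at the new RIS configuration and at the fixed-point RIS configuration), Q an N_BS×N_BS complex matrix with P = Q Q^H positive semidefinite (Q playing the role of P^{1/2}), and let D and D̄ be N_U×N_U positive definite Hermitian complex matrices. Define S = H P H^H, S̄ = H̄ P H̄^H, V = H Q, V̄ = H̄ Q. Then log₂ det(I + D^{-1} S) ≥ log₂ det(I + D̄^{-1} S̄) − (1/ln 2) [ Tr(S̄ D̄^{-1}) − 2 Re Tr(V̄^H D̄^{-1} V) + Tr( (D̄^{-1} − (S̄ + D̄)^{-1})^H (S + D) ) ]. -/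
open Matrix
open scoped ComplexOrder

-- diag/trace nonneg of PSD
lemma psd_trace_re_nonneg {n : Type*} [Fintype n] [DecidableEq n] {M : Matrix n n ℂ}
    (hM : M.PosSemidef) : 0 ≤ (Matrix.trace M).re := by
  have h : ∀ i, 0 ≤ (M i i).re := by
    intro i
    have := hM.re_dotProduct_nonneg (Pi.single i 1)
    simpa [Matrix.mulVec_single, dotProduct, Pi.single_apply] using this
  simp only [Matrix.trace, Matrix.diag, Complex.re_sum]
  exact Finset.sum_nonneg fun i _ => h i

lemma trace_re_congruence_nonneg {n m : Type*} [Fintype n] [Fintype m] [DecidableEq n]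
    [DecidableEq m] {W : Matrix m m ℂ} (hW : W.PosSemidef)
    {A : Matrix n n ℂ} (hA : A.PosSemidef) (K : Matrix n m ℂ) :
    0 ≤ (Matrix.trace (W * (Kᴴ * A * K))).re := by
  obtain ⟨C, hC⟩ : ∃ C : Matrix m m ℂ, W = Cᴴ * C := by
    open scoped MatrixOrder in
    have h1 : (CFC.sqrt W)ᴴ = CFC.sqrt W := (CFC.sqrt_nonneg W).posSemidef.1
    open scoped MatrixOrder in
    exact ⟨CFC.sqrt W, by rw [h1, CFC.sqrt_mul_sqrt_self W hW.nonneg]⟩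
  have h1 : W * (Kᴴ * A * K) = Cᴴ * (C * (Kᴴ * A * K)) := by
    rw [hC, Matrix.mul_assoc]
  rw [h1, Matrix.trace_mul_comm]
  have h2 : C * (Kᴴ * A * K) * Cᴴ = (K * Cᴴ)ᴴ * A * (K * Cᴴ) := by
    simp only [Matrix.conjTranspose_mul, Matrix.conjTranspose_conjTranspose, Matrix.mul_assoc]
  rw [h2]
  exact psd_trace_re_nonneg (hA.conjTranspose_mul_mul_same _)

lemma pd_det_eq_re {n : Type*} [Fintype n] [DecidableEq n] {M : Matrix n n ℂ}
    (hM : M.PosDef) : M.det = (M.det.re : ℂ) := by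
  have h := hM.det_pos
  rw [Complex.pos_iff] at h
  exact Complex.ext rfl h.2.symm

lemma pd_trace_eq_sum {n : Type*} [Fintype n] [DecidableEq n] {M : Matrix n n ℂ}
    (hM : M.IsHermitian) :
    Matrix.trace M = ∑ i, (hM.eigenvalues i : ℂ) := by
  calc Matrix.trace M
      = Matrix.trace ((hM.eigenvectorUnitary : Matrix n n ℂ) *
          diagonal (RCLike.ofReal ∘ hM.eigenvalues) *
          (star (hM.eigenvectorUnitary : Matrix n n ℂ))) := by
          conv_lhs => rw [hM.spectral_theorem, Unitary.conjStarAlgAut_apply]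
    _ = Matrix.trace ((star (hM.eigenvectorUnitary : Matrix n n ℂ)) *
          (hM.eigenvectorUnitary : Matrix n n ℂ) *
          diagonal (RCLike.ofReal ∘ hM.eigenvalues)) := by
        rw [Matrix.trace_mul_cycle]
    _ = ∑ i, (hM.eigenvalues i : ℂ) := by
        rw [Unitary.coe_star_mul_self, Matrix.one_mul, Matrix.trace_diagonal]
        rfl

-- log det P ≤ trace P - card for PD P
lemma pd_log_det_le {n : Type*} [Fintype n] [DecidableEq n] {P : Matrix n n ℂ}
    (hP : P.PosDef) :
    Real.log P.det.re ≤ (Matrix.trace P).re - Fintype.card n := by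
  have hH := hP.isHermitian
  have hdr : P.det.re = ∏ i, hH.eigenvalues i := by
    rw [hH.det_eq_prod_eigenvalues]
    norm_cast
  have htr : (Matrix.trace P).re = ∑ i, hH.eigenvalues i := by
    rw [pd_trace_eq_sum hH]
    norm_cast
  rw [hdr, htr]
  rw [Real.log_prod (fun i _ => (hP.eigenvalues_pos i).ne')]
  have : ∀ i ∈ Finset.univ, Real.log (hH.eigenvalues i) ≤ hH.eigenvalues i - 1 :=
    fun i _ => Real.log_le_sub_one_of_pos (hP.eigenvalues_pos i)
  calc ∑ i, Real.log (hH.eigenvalues i) ≤ ∑ i, (hH.eigenvalues i - 1) :=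
        Finset.sum_le_sum this
    _ = (∑ i, hH.eigenvalues i) - Fintype.card n := by
        rw [Finset.sum_sub_distrib]
        simp [Finset.card_univ]

lemma posDef_conj_of_isUnit {n : Type*} [Fintype n] [DecidableEq n]
    {F C : Matrix n n ℂ} (hF : F.PosDef) (hC : IsUnit C) :
    (Cᴴ * F * C).PosDef := by
  refine Matrix.PosDef.of_dotProduct_mulVec_pos (Matrix.isHermitian_conjTranspose_mul_mul C hF.1) fun x hx => ?_
  have hinj : Function.Injective C.mulVec := Matrix.mulVec_injective_iff_isUnit.mpr hC
  have hCx : C *ᵥ x ≠ 0 := fun h => hx (by simpa using hinj (h.trans (Matrix.mulVec_zero C).symm))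
  simpa only [star_mulVec, Matrix.dotProduct_mulVec, Matrix.vecMul_vecMul]
    using hF.dotProduct_mulVec_pos hCx
-- log det W + log det F ≤ Re tr(W F) - card
lemma logdet_pair_le {m : Type*} [Fintype m] [DecidableEq m] {W F : Matrix m m ℂ}
    (hW : W.PosDef) (hF : F.PosDef) :
    Real.log W.det.re + Real.log F.det.re ≤ (Matrix.trace (W * F)).re - Fintype.card m := by
  open scoped MatrixOrder in
  set C := CFC.sqrt W with hCdef
  open scoped MatrixOrder in
  have hCH : Cᴴ = C := (CFC.sqrt_nonneg W).posSemidef.1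
  open scoped MatrixOrder in
  have hCC : C * C = W := CFC.sqrt_mul_sqrt_self W hW.posSemidef.nonneg
  have hCdet : IsUnit C.det := by
    have : C.det * C.det = W.det := by rw [← Matrix.det_mul, hCC]
    have hW0 : W.det ≠ 0 := hW.det_pos.ne'
    exact isUnit_iff_ne_zero.mpr (fun h => hW0 (by rw [← this, h, mul_zero]))
  have hCunit : IsUnit C := (Matrix.isUnit_iff_isUnit_det C).mpr hCdet
  have hP : (Cᴴ * F * C).PosDef := posDef_conj_of_isUnit hF hCunit
  have hPdet : (Cᴴ * F * C).det = W.det * F.det := by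
    rw [Matrix.det_mul, Matrix.det_mul, hCH]
    rw [show C.det * F.det * C.det = (C * C).det * F.det by rw [Matrix.det_mul]; ring, hCC]
  have hPtr : Matrix.trace (Cᴴ * F * C) = Matrix.trace (W * F) := by
    rw [Matrix.trace_mul_cycle, hCH, hCC]
  have h1 := pd_log_det_le hP
  rw [hPtr] at h1
  have hre : (Cᴴ * F * C).det.re = W.det.re * F.det.re := by
    rw [hPdet, pd_det_eq_re hW, pd_det_eq_re hF, ← Complex.ofReal_mul]
    simp
  rw [hre] at h1
  have hWpos : 0 < W.det.re := (Complex.pos_iff.mp hW.det_pos).1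
  have hFpos : 0 < F.det.re := (Complex.pos_iff.mp hF.det_pos).1
  rwa [Real.log_mul hWpos.ne' hFpos.ne'] at h1

/-- Corollary 2 (concave lower bound on the per-subband TIN rate for the RIS update):
with `P = Q Qᴴ`, `S = H P Hᴴ`, `S̄ = H̄ P H̄ᴴ`, `V = H Q`, `V̄ = H̄ Q`,
`log₂ det(I + D⁻¹ S) ≥ log₂ det(I + D̄⁻¹ S̄) − (1/ln 2) [ Tr(S̄ D̄⁻¹)
  − 2 Re Tr(V̄ᴴ D̄⁻¹ V) + Tr((D̄⁻¹ − (S̄ + D̄)⁻¹)ᴴ (S + D)) ]`. -/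
theorem rate_lower_bound_ris_update
    (NU NBS : ℕ)
    (H Hbar : Matrix (Fin NU) (Fin NBS) ℂ)
    (Q : Matrix (Fin NBS) (Fin NBS) ℂ)
    (D Dbar : Matrix (Fin NU) (Fin NU) ℂ)
    (hD : D.PosDef) (hDbar : Dbar.PosDef) :
    Real.logb 2 ((1 + D⁻¹ * (H * (Q * Qᴴ) * Hᴴ)).det.re)
      ≥ Real.logb 2 ((1 + Dbar⁻¹ * (Hbar * (Q * Qᴴ) * Hbarᴴ)).det.re)
        - (1 / Real.log 2) *
          ((Matrix.trace ((Hbar * (Q * Qᴴ) * Hbarᴴ) * Dbar⁻¹)).re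
            - 2 * (Matrix.trace ((Hbar * Q)ᴴ * Dbar⁻¹ * (H * Q))).re
            + (Matrix.trace ((Dbar⁻¹ - ((Hbar * (Q * Qᴴ) * Hbarᴴ) + Dbar)⁻¹)ᴴ
                * ((H * (Q * Qᴴ) * Hᴴ) + D))).re) := by
  set V : Matrix (Fin NU) (Fin NBS) ℂ := H * Q with hVdef
  set Vb : Matrix (Fin NU) (Fin NBS) ℂ := Hbar * Q with hVbdef
  have hSrw : H * (Q * Qᴴ) * Hᴴ = V * Vᴴ := by
    rw [hVdef, Matrix.conjTranspose_mul]; simp only [Matrix.mul_assoc]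
  have hSbrw : Hbar * (Q * Qᴴ) * Hbarᴴ = Vb * Vbᴴ := by
    rw [hVbdef, Matrix.conjTranspose_mul]; simp only [Matrix.mul_assoc]
  rw [hSrw, hSbrw]
  set S := V * Vᴴ with hSdef
  set Sb := Vb * Vbᴴ with hSbdef
  set A := S + D with hAdef
  set Ab := Sb + Dbar with hAbdef
  -- basic positivity
  have hSpsd : S.PosSemidef := Matrix.posSemidef_self_mul_conjTranspose V
  have hSbpsd : Sb.PosSemidef := Matrix.posSemidef_self_mul_conjTranspose Vb
  have hApd : A.PosDef := Matrix.PosDef.posSemidef_add hSpsd hD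
  have hAbpd : Ab.PosDef := Matrix.PosDef.posSemidef_add hSbpsd hDbar
  -- invertibility
  have hDd : IsUnit D.det := isUnit_iff_ne_zero.mpr hD.det_pos.ne'
  have hAd : IsUnit A.det := isUnit_iff_ne_zero.mpr hApd.det_pos.ne'
  have hDbd : IsUnit Dbar.det := isUnit_iff_ne_zero.mpr hDbar.det_pos.ne'
  have hAbd : IsUnit Ab.det := isUnit_iff_ne_zero.mpr hAbpd.det_pos.ne'
  have hDD : D⁻¹ * D = 1 := Matrix.nonsing_inv_mul D hDd
  have hAA : A * A⁻¹ = 1 := Matrix.mul_nonsing_inv A hAd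
  have hA'A : A⁻¹ * A = 1 := Matrix.nonsing_inv_mul A hAd
  have hDbDb : Dbar * Dbar⁻¹ = 1 := Matrix.mul_nonsing_inv Dbar hDbd
  have hAb'Ab : Ab⁻¹ * Ab = 1 := Matrix.nonsing_inv_mul Ab hAbd
  have hAbAb : Ab * Ab⁻¹ = 1 := Matrix.mul_nonsing_inv Ab hAbd
  -- hermitian inverses
  have hAinvH : A⁻¹ᴴ = A⁻¹ := hApd.isHermitian.inv
  have hAbinvH : Ab⁻¹ᴴ = Ab⁻¹ := hAbpd.isHermitian.inv
  have hDbinvH : Dbar⁻¹ᴴ = Dbar⁻¹ := hDbar.isHermitian.inv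
  -- central identities
  have hDSA : D⁻¹ * S * A⁻¹ = D⁻¹ - A⁻¹ := by
    have h1 : D⁻¹ * A * A⁻¹ = D⁻¹ := by rw [Matrix.mul_assoc, hAA, Matrix.mul_one]
    have h2 : D⁻¹ * A * A⁻¹ = D⁻¹ * S * A⁻¹ + A⁻¹ := by
      rw [hAdef, Matrix.mul_add, hDD, Matrix.add_mul, Matrix.one_mul]
    exact eq_sub_of_add_eq (h2.symm.trans h1)
  have hDSAb : Dbar⁻¹ * Sb * Ab⁻¹ = Dbar⁻¹ - Ab⁻¹ := by
    have h1 : Dbar⁻¹ * Ab * Ab⁻¹ = Dbar⁻¹ := by rw [Matrix.mul_assoc, hAbAb, Matrix.mul_one]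
    have h2 : Dbar⁻¹ * Ab * Ab⁻¹ = Dbar⁻¹ * Sb * Ab⁻¹ + Ab⁻¹ := by
      rw [hAbdef, Matrix.mul_add, Matrix.nonsing_inv_mul Dbar hDbd, Matrix.add_mul,
        Matrix.one_mul]
    exact eq_sub_of_add_eq (h2.symm.trans h1)
  have hASDb : Ab⁻¹ * Sb * Dbar⁻¹ = Dbar⁻¹ - Ab⁻¹ := by
    have h1 : Ab⁻¹ * Ab * Dbar⁻¹ = Dbar⁻¹ := by rw [hAb'Ab, Matrix.one_mul]
    have h2 : Ab⁻¹ * Ab * Dbar⁻¹ = Ab⁻¹ * Sb * Dbar⁻¹ + Ab⁻¹ := by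
      rw [hAbdef, Matrix.mul_add, Matrix.add_mul, Matrix.mul_assoc Ab⁻¹ Dbar, hDbDb,
        Matrix.mul_one]
    exact eq_sub_of_add_eq (h2.symm.trans h1)
  -- the matrices of the WMMSE argument
  set X := Vᴴ * D⁻¹ * V with hXdef
  set Y := Vᴴ * A⁻¹ * V with hYdef
  set G := (1 : Matrix (Fin NBS) (Fin NBS) ℂ) + X with hGdef
  set F := (1 : Matrix (Fin NBS) (Fin NBS) ℂ) - Y with hFdef
  set Xb := Vbᴴ * Dbar⁻¹ * Vb with hXbdef
  set W := (1 : Matrix (Fin NBS) (Fin NBS) ℂ) + Xb with hWdef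
  set U := Ab⁻¹ * Vb with hUdef
  set K := U - A⁻¹ * V with hKdef
  clear_value V Vb S Sb A Ab X Y G F Xb W U K
  have hXY : X * Y = X - Y := by
    have h : X * Y = Vᴴ * (D⁻¹ * S * A⁻¹) * V := by
      rw [hXdef, hYdef, hSdef]; simp only [Matrix.mul_assoc]
    rw [h, hDSA, Matrix.mul_sub, Matrix.sub_mul, hXdef, hYdef]
  have hGF : G * F = 1 := by
    have h : G * F = 1 + X - Y - X * Y := by rw [hGdef, hFdef]; noncomm_ring
    rw [h, hXY]; abel
  have hXpsd : X.PosSemidef := by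
    rw [hXdef]; exact hD.inv.posSemidef.conjTranspose_mul_mul_same V
  have hGpd : G.PosDef := by rw [hGdef]; exact Matrix.PosDef.one.add_posSemidef hXpsd
  have hFpd : F.PosDef := by
    have h := hGpd.inv
    rwa [Matrix.inv_eq_right_inv hGF] at h
  have hXbpsd : Xb.PosSemidef := by
    rw [hXbdef]; exact hDbar.inv.posSemidef.conjTranspose_mul_mul_same Vb
  have hWpd : W.PosDef := by rw [hWdef]; exact Matrix.PosDef.one.add_posSemidef hXbpsd
  have hWH : Wᴴ = W := hWpd.isHermitian
  have hUW : U * W = Dbar⁻¹ * Vb := by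
    have h : U * W = Ab⁻¹ * Vb + Ab⁻¹ * Sb * Dbar⁻¹ * Vb := by
      rw [hUdef, hWdef, hXbdef, hSbdef]
      simp only [Matrix.mul_add, Matrix.mul_one, Matrix.mul_assoc]
    rw [h, hASDb, Matrix.sub_mul]; abel
  have hUH : Uᴴ = Vbᴴ * Ab⁻¹ := by rw [hUdef, Matrix.conjTranspose_mul, hAbinvH]
  have hWU : W * Uᴴ = Vbᴴ * Dbar⁻¹ := by
    rw [← hWH, ← Matrix.conjTranspose_mul, hUW, Matrix.conjTranspose_mul, hDbinvH]
  have hKAK : Kᴴ * A * K = Uᴴ * A * U - Uᴴ * V - Vᴴ * U + Vᴴ * A⁻¹ * V := by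
    have e1 : ∀ M : Matrix (Fin NU) (Fin NBS) ℂ, A * (A⁻¹ * M) = M := fun M => by
      rw [← Matrix.mul_assoc, hAA, Matrix.one_mul]
    have e2 : ∀ M : Matrix (Fin NU) (Fin NBS) ℂ, A⁻¹ * (A * M) = M := fun M => by
      rw [← Matrix.mul_assoc, hA'A, Matrix.one_mul]
    rw [hKdef, Matrix.conjTranspose_sub, Matrix.conjTranspose_mul, hAinvH]
    simp only [Matrix.sub_mul, Matrix.mul_sub, Matrix.mul_assoc, e1, e2]
    abel
  have hE : F + Kᴴ * A * K = 1 - Uᴴ * V - Vᴴ * U + Uᴴ * A * U := by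
    rw [hKAK, hFdef, hYdef]; abel
  -- trace computations
  have t0 : Matrix.trace W = (NBS : ℂ) + Matrix.trace (Sb * Dbar⁻¹) := by
    rw [hWdef, Matrix.trace_add, Matrix.trace_one]
    congr 1
    · simp
    · rw [hXbdef, Matrix.trace_mul_comm, ← Matrix.mul_assoc, ← hSbdef]
  have t1 : Matrix.trace (W * (Uᴴ * V)) = Matrix.trace (Vbᴴ * Dbar⁻¹ * V) := by
    rw [← Matrix.mul_assoc, hWU]
  have t2 : Matrix.trace (W * (Vᴴ * U)) = star (Matrix.trace (Vbᴴ * Dbar⁻¹ * V)) := by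
    rw [← Matrix.trace_conjTranspose]
    have h : (Vbᴴ * Dbar⁻¹ * V)ᴴ = Vᴴ * (Dbar⁻¹ * Vb) := by
      simp only [Matrix.conjTranspose_mul, Matrix.conjTranspose_conjTranspose, hDbinvH,
        Matrix.mul_assoc]
    rw [h, ← hUW, Matrix.trace_mul_comm W (Vᴴ * U), Matrix.mul_assoc]
  have t3 : Matrix.trace (W * (Uᴴ * A * U)) = Matrix.trace ((Dbar⁻¹ - Ab⁻¹) * A) := by
    calc Matrix.trace (W * (Uᴴ * A * U))
        = Matrix.trace (Uᴴ * A * U * W) := Matrix.trace_mul_comm _ _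
      _ = Matrix.trace (Uᴴ * A * (U * W)) := by simp only [Matrix.mul_assoc]
      _ = Matrix.trace (Uᴴ * A * (Dbar⁻¹ * Vb)) := by rw [hUW]
      _ = Matrix.trace (Dbar⁻¹ * Vb * (Uᴴ * A)) := Matrix.trace_mul_comm _ _
      _ = Matrix.trace (Dbar⁻¹ * Sb * Ab⁻¹ * A) := by
          rw [hUH, hSbdef]; simp only [Matrix.mul_assoc]
      _ = Matrix.trace ((Dbar⁻¹ - Ab⁻¹) * A) := by rw [hDSAb]
  have hWE : Matrix.trace (W * (F + Kᴴ * A * K)) =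
      (NBS : ℂ) + Matrix.trace (Sb * Dbar⁻¹) - Matrix.trace (Vbᴴ * Dbar⁻¹ * V)
        - star (Matrix.trace (Vbᴴ * Dbar⁻¹ * V)) + Matrix.trace ((Dbar⁻¹ - Ab⁻¹) * A) := by
    rw [hE]
    have expand : W * (1 - Uᴴ * V - Vᴴ * U + Uᴴ * A * U)
        = W - W * (Uᴴ * V) - W * (Vᴴ * U) + W * (Uᴴ * A * U) := by
      simp only [Matrix.mul_sub, Matrix.mul_add, Matrix.mul_one]
    rw [expand, Matrix.trace_add, Matrix.trace_sub, Matrix.trace_sub, t0, t1, t2, t3]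
  -- the scalar inequality
  have key1 : Real.log W.det.re + Real.log F.det.re
      ≤ (Matrix.trace (W * F)).re - NBS := by
    have h := logdet_pair_le hWpd hFpd
    simpa using h
  have key2 : (Matrix.trace (W * F)).re ≤ (Matrix.trace (W * (F + Kᴴ * A * K))).re := by
    have h := trace_re_congruence_nonneg hWpd.posSemidef hApd.posSemidef K
    have e : W * (F + Kᴴ * A * K) = W * F + W * (Kᴴ * A * K) := by rw [Matrix.mul_add]
    rw [e, Matrix.trace_add, Complex.add_re]; linarith
  have hGre : 0 < G.det.re := (Complex.pos_iff.mp hGpd.det_pos).1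
  have hFre : 0 < F.det.re := (Complex.pos_iff.mp hFpd.det_pos).1
  have hre1 : G.det.re * F.det.re = 1 := by
    have hdet1 : G.det * F.det = 1 := by rw [← Matrix.det_mul, hGF, Matrix.det_one]
    rw [pd_det_eq_re hGpd, pd_det_eq_re hFpd, ← Complex.ofReal_mul] at hdet1
    exact_mod_cast hdet1
  have hlogF : Real.log F.det.re = - Real.log G.det.re := by
    have h : F.det.re = (G.det.re)⁻¹ := eq_inv_of_mul_eq_one_right (by linarith [hre1, mul_comm G.det.re F.det.re])
    rw [h, Real.log_inv]
  -- assemble real inequality: log W - Δ ≤ log G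
  set Δ : ℝ := (Matrix.trace (Sb * Dbar⁻¹)).re
      - 2 * (Matrix.trace (Vbᴴ * Dbar⁻¹ * V)).re
      + (Matrix.trace ((Dbar⁻¹ - Ab⁻¹) * A)).re with hΔdef
  have hWEre : (Matrix.trace (W * (F + Kᴴ * A * K))).re = NBS + Δ := by
    rw [hWE, hΔdef]
    simp only [Complex.add_re, Complex.sub_re, Complex.natCast_re, Complex.conj_re,
      RCLike.star_def]
    ring
  have main : Real.log W.det.re - Δ ≤ Real.log G.det.re := by
    rw [hlogF] at key1
    rw [hWEre] at key2
    linarith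
  -- conclude
  have hdetG : (1 + D⁻¹ * S).det = G.det := by
    calc (1 + D⁻¹ * S).det = (1 + (D⁻¹ * V) * Vᴴ).det := by
          rw [hSdef, ← Matrix.mul_assoc]
      _ = (1 + Vᴴ * (D⁻¹ * V)).det := Matrix.det_one_add_mul_comm _ _
      _ = G.det := by rw [hGdef, hXdef, Matrix.mul_assoc]
  have hdetW : (1 + Dbar⁻¹ * Sb).det = W.det := by
    calc (1 + Dbar⁻¹ * Sb).det = (1 + (Dbar⁻¹ * Vb) * Vbᴴ).det := by
          rw [hSbdef, ← Matrix.mul_assoc]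
      _ = (1 + Vbᴴ * (Dbar⁻¹ * Vb)).det := Matrix.det_one_add_mul_comm _ _
      _ = W.det := by rw [hWdef, hXbdef, Matrix.mul_assoc]
  have hherm : (Dbar⁻¹ - Ab⁻¹)ᴴ = Dbar⁻¹ - Ab⁻¹ := by
    rw [Matrix.conjTranspose_sub, hDbinvH, hAbinvH]
  rw [hdetG, hdetW, hherm]
  rw [ge_iff_le, Real.logb, Real.logb]
  have hlog2 : 0 < Real.log 2 := Real.log_pos one_lt_two
  have hdiv : (Real.log W.det.re - Δ) / Real.log 2 ≤ Real.log G.det.re / Real.log 2 := by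
    gcongr
  have e : (Real.log W.det.re - Δ) / Real.log 2
      = Real.log W.det.re / Real.log 2 - 1 / Real.log 2 * Δ := by ring
  rw [hΔdef] at hdiv e
  linarith [hdiv, e]
end
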